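/- Let (Ω, 𝓕, μₚ) be a probability space, W : Ω → ℝ a nonnegative measurable function with ∫ W dμₚ = 1, μₜ = μₚ.withDensity W, and let R : Ω → ℝ be measurable with 0 ≤ R ≤ r_max and W·R integrable with respect to μₚ. Fix a capping level c > 0 and set the max-capped weight W̄ = min(W, c). Then the expected reward under the test policy decomposes as ∫ R dμₜ = ∫ W̄ · R dμₚ + ∫ (W − W̄) · R dμₚ, and the second (bias) term can be rewritten under the test measure as ∫ (W − W̄) · R dμₚ = ∫_{ {ω : W ω > c} } (1 − c / W(ω)) · R(ω) dμₜ(ω). -/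

import Mathlib

open MeasureTheory
open scoped NNReal ENNReal

/-- Decomposition of the expected reward under the test policy into the max-capped
capped importance sampling term and the bias term, together with the rewriting of the bias
term under the test measure:
`∫ R dμₜ = ∫ min(W,c)·R dμₚ + ∫ (W − min(W,c))·R dμₚ` and
`∫ (W − min(W,c))·R dμₚ = ∫_{W > c} (1 − c/W)·R dμₜ`. -/
theorem cis_bias_decomposition
    {Ω : Type*} [MeasurableSpace Ω] (μₚ : Measure Ω) [IsProbabilityMeasure μₚ]
    (W : Ω → ℝ) (hW_meas : Measurable W) (hW_nonneg : ∀ ω, 0 ≤ W ω)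
    (hW_int : ∫ ω, W ω ∂μₚ = 1)
    (μₜ : Measure Ω) (hμₜ : μₜ = μₚ.withDensity (fun ω => ENNReal.ofReal (W ω)))
    (R : Ω → ℝ) (hR_meas : Measurable R)
    (r_max : ℝ) (hR_nonneg : ∀ ω, 0 ≤ R ω) (hR_le : ∀ ω, R ω ≤ r_max)
    (hWR_int : Integrable (fun ω => W ω * R ω) μₚ)
    (c : ℝ) (hc : 0 < c) :
    (∫ ω, R ω ∂μₜ
        = ∫ ω, min (W ω) c * R ω ∂μₚ + ∫ ω, (W ω - min (W ω) c) * R ω ∂μₚ) ∧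
    (∫ ω, (W ω - min (W ω) c) * R ω ∂μₚ
        = ∫ ω in {ω | W ω > c}, (1 - c / W ω) * R ω ∂μₜ) := by
  have hofReal : (fun ω => ENNReal.ofReal (W ω)) =
      fun ω => (((W ω).toNNReal : ℝ≥0) : ℝ≥0∞) := by
    ext ω; simp [ENNReal.ofReal]
  have hWnn_meas : Measurable fun ω => (W ω).toNNReal := hW_meas.real_toNNReal
  -- min(W,c)*R is integrable (bounded measurable on a probability space)
  have hmin_int : Integrable (fun ω => min (W ω) c * R ω) μₚ := by
    apply Integrable.mono' (g := fun ω => c * r_max)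
    · exact integrable_const _
    · exact ((hW_meas.min measurable_const).mul hR_meas).aestronglyMeasurable
    · filter_upwards with ω
      rw [Real.norm_eq_abs, abs_of_nonneg (mul_nonneg (le_min (hW_nonneg ω) hc.le) (hR_nonneg ω))]
      exact mul_le_mul (min_le_right _ _) (hR_le ω) (hR_nonneg ω) hc.le
  have hsub_int : Integrable (fun ω => (W ω - min (W ω) c) * R ω) μₚ := by
    have : (fun ω => (W ω - min (W ω) c) * R ω)
        = fun ω => W ω * R ω - min (W ω) c * R ω := by
      ext ω; ring
    rw [this]
    exact hWR_int.sub hmin_int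
  have hS : MeasurableSet {ω | W ω > c} := measurableSet_lt measurable_const hW_meas
  constructor
  · -- first part
    have h1 : ∫ ω, R ω ∂μₜ = ∫ ω, W ω * R ω ∂μₚ := by
      rw [hμₜ, hofReal, integral_withDensity_eq_integral_smul hWnn_meas]
      apply integral_congr_ae
      filter_upwards with ω
      simp [NNReal.smul_def, Real.coe_toNNReal _ (hW_nonneg ω)]
    rw [h1, ← integral_add hmin_int hsub_int]
    apply integral_congr_ae
    filter_upwards with ω
    ring
  · -- bias rewriting
    rw [hμₜ, hofReal, restrict_withDensity hS,
      integral_withDensity_eq_integral_smul hWnn_meas]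
    rw [← integral_indicator hS]
    apply integral_congr_ae
    filter_upwards with ω
    rw [Set.indicator_apply]
    by_cases h : ω ∈ {ω | W ω > c}
    · have hWpos : 0 < W ω := lt_trans hc h
      rw [if_pos h]
      have : min (W ω) c = c := min_eq_right (le_of_lt h)
      rw [this]
      rw [NNReal.smul_def, Real.coe_toNNReal _ (hW_nonneg ω)]
      field_simp
      rw [smul_eq_mul, mul_div_cancel₀ _ hWpos.ne']
    · rw [if_neg h]
      have : min (W ω) c = W ω := min_eq_left (not_lt.mp h)
      rw [this]
      ring
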